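/- Let G be a context-free grammar and A a nonterminal such that A ⇒⁺ m A m' A m'' for some sentential forms m, m', m''. Then the downward closure of L(G, A) under the subword ordering equals α(L(G, A))*, where α(L(G, A)) is the set of terminal letters occurring in some word of L(G, A). -/

import Mathlib

open ContextFreeGrammar

/-- The language generated by grammar `g` starting from the nonterminal `A`. -/
def langFrom {T : Type} (g : ContextFreeGrammar T) (A : g.NT) : Set (List T) :=
  {w | g.Derives [Symbol.nonterminal A] (w.map Symbol.terminal)}

/-- `α(L)`: the set of terminal letters occurring in some word of `L`. -/
def alph {T : Type} (L : Set (List T)) : Set T :=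
  {a | ∃ w ∈ L, a ∈ w}

/-- Downward closure under the subword ordering. -/
def downClosure {T : Type} (L : Set (List T)) : Set (List T) :=
  {u | ∃ v ∈ L, u.Sublist v}

/-- Every sentential form derives some terminal word (no useless symbols). -/
lemma sentential_derives_terminal {T : Type} (g : ContextFreeGrammar T)
    (huseful : ∀ B : g.NT, ∃ w : List T,
      g.Derives [Symbol.nonterminal B] (w.map Symbol.terminal)) :
    ∀ s : List (Symbol T g.NT), ∃ w : List T, g.Derives s (w.map Symbol.terminal) := by
  intro s
  induction s with
  | nil => exact ⟨[], by exact Relation.ReflTransGen.refl⟩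
  | cons sym s ih =>
    obtain ⟨w, hw⟩ := ih
    cases sym with
    | terminal t =>
      refine ⟨t :: w, ?_⟩
      have := hw.append_left [Symbol.terminal t]
      simpa using this
    | nonterminal B =>
      obtain ⟨wb, hb⟩ := huseful B
      refine ⟨wb ++ w, ?_⟩
      have h1 : g.Derives (Symbol.nonterminal B :: s) (wb.map Symbol.terminal ++ s) := by
        simpa using hb.append_right s
      have h2 := hw.append_left (wb.map Symbol.terminal)
      simpa using h1.trans h2

/-- If `A ⇒⁺ m A m' A m''` in a CFG without useless symbols, then
`L(G, A)↓ = α(L(G, A))*`. -/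
theorem downClosure_eq_star_of_self_twice {T : Type} (g : ContextFreeGrammar T) (A : g.NT)
    (huseful : ∀ B : g.NT, ∃ w : List T,
      g.Derives [Symbol.nonterminal B] (w.map Symbol.terminal))
    (hAA : ∃ m m' m'' : List (Symbol T g.NT),
      Relation.TransGen g.Produces [Symbol.nonterminal A]
        (m ++ [Symbol.nonterminal A] ++ m' ++ [Symbol.nonterminal A] ++ m'')) :
    downClosure (langFrom g A) = {u : List T | ∀ a ∈ u, a ∈ alph (langFrom g A)} := by
  obtain ⟨m, m', m'', hA⟩ := hAA
  -- Derivation A ⇒* x A y A z with terminal x, y, z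
  obtain ⟨x, hx⟩ := sentential_derives_terminal g huseful m
  obtain ⟨y, hy⟩ := sentential_derives_terminal g huseful m'
  obtain ⟨z, hz⟩ := sentential_derives_terminal g huseful m''
  have hpump : g.Derives [Symbol.nonterminal A]
      (x.map Symbol.terminal ++ [Symbol.nonterminal A] ++ y.map Symbol.terminal
        ++ [Symbol.nonterminal A] ++ z.map Symbol.terminal) := by
    have h0 : g.Derives [Symbol.nonterminal A]
        (m ++ [Symbol.nonterminal A] ++ m' ++ [Symbol.nonterminal A] ++ m'') :=
      hA.to_reflTransGen
    have h1 : g.Derives (m ++ ([Symbol.nonterminal A] ++ m' ++ [Symbol.nonterminal A] ++ m''))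
        (x.map Symbol.terminal ++ ([Symbol.nonterminal A] ++ m' ++ [Symbol.nonterminal A] ++ m'')) :=
      hx.append_right _
    have h2 : g.Derives (m' ++ ([Symbol.nonterminal A] ++ m''))
        (y.map Symbol.terminal ++ ([Symbol.nonterminal A] ++ m'')) := hy.append_right _
    have h2' := (h2.append_left (x.map Symbol.terminal ++ [Symbol.nonterminal A]))
    have h3' := (hz.append_left (x.map Symbol.terminal ++ [Symbol.nonterminal A]
        ++ y.map Symbol.terminal ++ [Symbol.nonterminal A]))
    have := (h0.trans (by simpa [List.append_assoc] using h1)).trans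
        (by simpa [List.append_assoc] using h2')
    exact (this.trans (by simpa [List.append_assoc] using h3'))
  ext u
  simp only [downClosure, alph, langFrom, Set.mem_setOf_eq]
  constructor
  · rintro ⟨v, hv, huv⟩ a ha
    exact ⟨v, hv, huv.subset ha⟩
  · intro h
    induction u with
    | nil =>
      obtain ⟨w, hw⟩ := huseful A
      exact ⟨w, hw, List.nil_sublist w⟩
    | cons a u ih =>
      obtain ⟨v, hv, huv⟩ := ih (fun b hb => h b (List.mem_cons_of_mem a hb))
      obtain ⟨wa, hwa, hawa⟩ := h a List.mem_cons_self
      refine ⟨x ++ wa ++ y ++ v ++ z, ?_, ?_⟩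
      · -- derivation
        have hstep1 : g.Derives
            (x.map Symbol.terminal ++ [Symbol.nonterminal A] ++ y.map Symbol.terminal
              ++ [Symbol.nonterminal A] ++ z.map Symbol.terminal)
            (x.map Symbol.terminal ++ wa.map Symbol.terminal ++ y.map Symbol.terminal
              ++ [Symbol.nonterminal A] ++ z.map Symbol.terminal) := by
          have := ((hwa.append_right (y.map Symbol.terminal ++ [Symbol.nonterminal A]
              ++ z.map Symbol.terminal)).append_left (x.map Symbol.terminal))
          simpa [List.append_assoc] using this
        have hstep2 : g.Derives
            (x.map Symbol.terminal ++ wa.map Symbol.terminal ++ y.map Symbol.terminal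
              ++ [Symbol.nonterminal A] ++ z.map Symbol.terminal)
            (x.map Symbol.terminal ++ wa.map Symbol.terminal ++ y.map Symbol.terminal
              ++ v.map Symbol.terminal ++ z.map Symbol.terminal) := by
          have := ((hv.append_right (z.map Symbol.terminal)).append_left
              (x.map Symbol.terminal ++ wa.map Symbol.terminal ++ y.map Symbol.terminal))
          simpa [List.append_assoc] using this
        have := (hpump.trans hstep1).trans hstep2
        simpa [List.map_append, List.append_assoc] using this
      · -- sublist
        have h1 : [a].Sublist wa := List.singleton_sublist.mpr hawa
        have h2 : (a :: u).Sublist (wa ++ v) := h1.append huv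
        have h3 : (wa ++ v).Sublist ((x ++ wa) ++ (y ++ (v ++ z))) := by
          refine List.Sublist.append ?_ ?_
          · exact (List.sublist_append_right x wa)
          · exact ((List.sublist_append_left v z).trans
              (List.sublist_append_right y (v ++ z)))
        have := h2.trans h3
        simpa [List.append_assoc] using this
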